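/- For any 2-edge-connected graph G = (V, E), if G is contractible to a path P by q edge contractions, then q ≥ (|V| − 1)/3. -/

import Mathlib

open SimpleGraph

/-- Contraction of the edge `uv` in `G`: remove `v`, attaching its former
neighbours to `u`. -/
def SimpleGraph.contractEdge {V : Type} (G : SimpleGraph V) (u v : V) :
    SimpleGraph {x : V // x ≠ v} :=
  SimpleGraph.fromRel (fun a b =>
    G.Adj a.1 b.1 ∨ (a.1 = u ∧ G.Adj v b.1) ∨ (b.1 = u ∧ G.Adj v a.1))

/-- `ContractsIn G H n` : `H` is obtained from `G` by exactly `n` edge contractions. -/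
inductive ContractsIn : {V : Type} → SimpleGraph V → {W : Type} → SimpleGraph W → ℕ → Prop
  | iso {V : Type} {G : SimpleGraph V} {W : Type} {H : SimpleGraph W} :
      Nonempty (G ≃g H) → ContractsIn G H 0
  | step {V : Type} {G : SimpleGraph V} (u v : V) (huv : G.Adj u v)
      {W : Type} {H : SimpleGraph W} {n : ℕ} :
      ContractsIn (G.contractEdge u v) H n → ContractsIn G H (n + 1)

/-- `G` is contractible to `H`. -/
def ContractibleTo {V W : Type} (G : SimpleGraph V) (H : SimpleGraph W) : Prop :=
  ∃ n, ContractsIn G H n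

/-- `G` is `k`-contractible to `H` : `H` arises from `G` by at most `k` edge contractions. -/
def KContractible {V W : Type} (G : SimpleGraph V) (H : SimpleGraph W) (k : ℕ) : Prop :=
  ∃ n ≤ k, ContractsIn G H n

/-- An `H`-witness structure of `G`. -/
structure IsWitnessStructure {V W : Type} (G : SimpleGraph V) (H : SimpleGraph W)
    (Wit : W → Set V) : Prop where
  connected : ∀ h, (G.induce (Wit h)).Connected
  adj : ∀ h₁ h₂ : W, h₁ ≠ h₂ →
    (H.Adj h₁ h₂ ↔ ∃ a ∈ Wit h₁, ∃ b ∈ Wit h₂, G.Adj a b)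
  cover : ∀ v : V, ∃ h, v ∈ Wit h
  disjoint : ∀ h₁ h₂ : W, h₁ ≠ h₂ → Disjoint (Wit h₁) (Wit h₂)

/-- `P` is a path graph. -/
def IsPathGraph {W : Type} (P : SimpleGraph W) : Prop :=
  ∃ n, Nonempty (P ≃g SimpleGraph.pathGraph n)

/-- `C` is a cycle graph (on at least 3 vertices). -/
def IsCycleGraph {W : Type} (C : SimpleGraph W) : Prop :=
  ∃ n, 3 ≤ n ∧ Nonempty (C ≃g SimpleGraph.cycleGraph n)

/-- `G` is 2-edge-connected. -/
def TwoEdgeConnected {V : Type} (G : SimpleGraph V) : Prop :=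
  G.Connected ∧ ∀ e ∈ G.edgeSet, (G.deleteEdges {e}).Connected

/-- `G` is 2-connected. -/
def TwoConnected {V : Type} (G : SimpleGraph V) : Prop :=
  G.Connected ∧ 3 ≤ Nat.card V ∧ ∀ v : V, (G.induce {u | u ≠ v}).Connected

/-- `C₁` and `C₂` are (exactly the) two connected components of `G - {x, y}`. -/
def TwoComponents {V : Type} (G : SimpleGraph V) (x y : V) (C₁ C₂ : Set V) : Prop :=
  Disjoint C₁ C₂ ∧ C₁ ∪ C₂ = {v | v ≠ x ∧ v ≠ y} ∧
  C₁.Nonempty ∧ C₂.Nonempty ∧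
  (G.induce C₁).Connected ∧ (G.induce C₂).Connected ∧
  ∀ a ∈ C₁, ∀ b ∈ C₂, ¬ G.Adj a b

/-- `C` is an optimal (longest) cycle to which `G` can be contracted. -/
def OptimalCycle {V W : Type} (G : SimpleGraph V) (C : SimpleGraph W) : Prop :=
  IsCycleGraph C ∧ ContractibleTo G C ∧
  ∀ (W' : Type) (C' : SimpleGraph W'), IsCycleGraph C' → ContractibleTo G C' →
    Nat.card W' ≤ Nat.card W

/-- `G` can be contracted to a path, with `a` in one endpoint witness set and `b` in
the other, using at most `k` edge contractions. -/
def PathContractFixed {V : Type} (G : SimpleGraph V) (a b : V) (k : ℕ) : Prop :=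
  ∃ (n : ℕ) (Wit : Fin (n + 1) → Set V),
    IsWitnessStructure G (SimpleGraph.pathGraph (n + 1)) Wit ∧
    Nat.card V ≤ (n + 1) + k ∧
    ((a ∈ Wit 0 ∧ b ∈ Wit (Fin.last n)) ∨ (a ∈ Wit (Fin.last n) ∧ b ∈ Wit 0))

structure CMap {V W : Type} (G : SimpleGraph V) (P : SimpleGraph W) (f : V → W) : Prop where
  surj : Function.Surjective f
  adj_map : ∀ a b, G.Adj a b → f a = f b ∨ P.Adj (f a) (f b)
  adj_lift : ∀ w w', P.Adj w w' → ∃ a b, f a = w ∧ f b = w' ∧ G.Adj a b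

lemma contractEdge_adj_cases {V : Type} {G : SimpleGraph V} {u v : V}
    {a b : {x : V // x ≠ v}} (h : (G.contractEdge u v).Adj a b) :
    G.Adj a.1 b.1 ∨ (a.1 = u ∧ G.Adj v b.1) ∨ (b.1 = u ∧ G.Adj v a.1) := by
  rw [contractEdge, fromRel_adj] at h
  rcases h.2 with (h|h|h)|(h|h|h)
  · exact Or.inl h
  · exact Or.inr (Or.inl h)
  · exact Or.inr (Or.inr h)
  · exact Or.inl h.symm
  · exact Or.inr (Or.inr h)
  · exact Or.inr (Or.inl h)

lemma contractEdge_adj_of {V : Type} {G : SimpleGraph V} {u v : V}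
    {a b : {x : V // x ≠ v}} (hne : a ≠ b)
    (h : G.Adj a.1 b.1 ∨ (a.1 = u ∧ G.Adj v b.1) ∨ (b.1 = u ∧ G.Adj v a.1)) :
    (G.contractEdge u v).Adj a b := by
  rw [contractEdge, fromRel_adj]
  exact ⟨hne, Or.inl h⟩

theorem contractsIn_key {V : Type} {G : SimpleGraph V} {W : Type} {H : SimpleGraph W} {q : ℕ}
    (h : ContractsIn G H q) :
    Finite V → (∃ f, CMap G H f) ∧ Nat.card V = Nat.card W + q := by
  induction h with
  | @iso V G W H e =>
    intro hfin
    obtain ⟨e⟩ := e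
    constructor
    · refine ⟨e, e.toEquiv.surjective, ?_, ?_⟩
      · intro a b hab
        exact Or.inr (e.map_adj_iff.mpr hab)
      · intro w w' hww'
        refine ⟨e.symm w, e.symm w', e.apply_symm_apply w, e.apply_symm_apply w', ?_⟩
        exact e.symm.map_adj_iff.mpr hww'
    · rw [Nat.card_congr e.toEquiv]
      omega
  | @step V G u v huv W H n hrec ih =>
    intro hfin
    classical
    have hufin : Finite {x : V // x ≠ v} := Subtype.finite
    obtain ⟨⟨f', hf'⟩, hcard⟩ := ih hufin
    set f : V → W := fun x => if h : x = v then f' ⟨u, huv.ne⟩ else f' ⟨x, h⟩ with hf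
    have hfv : f v = f' ⟨u, huv.ne⟩ := by simp [hf]
    have hfx : ∀ (x : V) (hx : x ≠ v), f x = f' ⟨x, hx⟩ := by
      intro x hx; simp [hf, hx]
    constructor
    · refine ⟨f, ?_, ?_, ?_⟩
      · intro w
        obtain ⟨⟨x, hx⟩, hxw⟩ := hf'.surj w
        exact ⟨x, (hfx x hx).trans hxw⟩
      · -- adj_map
        have key : ∀ a b : V, G.Adj a b → a = v → f a = f b ∨ H.Adj (f a) (f b) := by
          intro a b hab ha
          have hGvb : G.Adj v b := ha ▸ hab
          have hbv : b ≠ v := fun hb => G.loopless.irrefl v (hb ▸ hGvb)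
          rw [ha, hfv, hfx b hbv]
          by_cases hbu : b = u
          · left; congr 1; exact Subtype.ext hbu.symm
          · have hadj' : (G.contractEdge u v).Adj ⟨u, huv.ne⟩ ⟨b, hbv⟩ := by
              refine contractEdge_adj_of (fun hc => hbu (congrArg Subtype.val hc).symm) ?_
              exact Or.inr (Or.inl ⟨rfl, hGvb⟩)
            exact hf'.adj_map _ _ hadj'
        intro a b hab
        by_cases ha : a = v
        · exact key a b hab ha
        · by_cases hb : b = v
          · rcases key b a hab.symm hb with h1 | h1
            · exact Or.inl h1.symm
            · exact Or.inr h1.symm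
          · have hadj' : (G.contractEdge u v).Adj ⟨a, ha⟩ ⟨b, hb⟩ := by
              refine contractEdge_adj_of (fun hc => hab.ne (congrArg Subtype.val hc)) ?_
              exact Or.inl hab
            rcases hf'.adj_map _ _ hadj' with h1 | h1
            · left; rw [hfx a ha, hfx b hb]; exact h1
            · right; rw [hfx a ha, hfx b hb]; exact h1
      · -- adj_lift
        intro w w' hww'
        obtain ⟨a', b', ha', hb', hadj'⟩ := hf'.adj_lift w w' hww'
        have hfa' : f a'.1 = w := by rw [hfx a'.1 a'.2, Subtype.coe_eta]; exact ha'
        have hfb' : f b'.1 = w' := by rw [hfx b'.1 b'.2, Subtype.coe_eta]; exact hb'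
        rcases contractEdge_adj_cases hadj' with h1 | ⟨h1, h2⟩ | ⟨h1, h2⟩
        · exact ⟨a'.1, b'.1, hfa', hfb', h1⟩
        · refine ⟨v, b'.1, ?_, hfb', h2⟩
          rw [hfv, ← ha']
          congr 1
          exact Subtype.ext h1.symm
        · refine ⟨a'.1, v, hfa', ?_, h2.symm⟩
          rw [hfv, ← hb']
          congr 1
          exact Subtype.ext h1.symm
    · -- cardinality
      have : Fintype V := Fintype.ofFinite V
      have h1 : Nat.card {x : V // x ≠ v} = Nat.card V - 1 := by
        rw [Nat.card_eq_fintype_card, Nat.card_eq_fintype_card]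
        have := Fintype.card_subtype_compl (fun x : V => x = v)
        rw [Fintype.card_subtype_eq] at this
        exact this
      have hpos : 1 ≤ Nat.card V := by
        rw [Nat.card_eq_fintype_card]
        exact Fintype.card_pos_iff.mpr ⟨v⟩
      omega

lemma cross_edge {V : Type} (H : SimpleGraph V) (A : Set V) :
    ∀ {x y : V}, H.Walk x y → x ∈ A → y ∉ A → ∃ p q, p ∈ A ∧ q ∉ A ∧ H.Adj p q := by
  intro x y p
  induction p with
  | nil => intro hx hy; exact (hy hx).elim
  | @cons x m y h p ih =>
    intro hx hy
    by_cases hm : m ∈ A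
    · exact ih hm hy
    · exact ⟨x, m, hx, hm, h⟩

/-- For any 2-edge-connected graph `G = (V, E)`, if `G` is contractible
to a path `P` by `q` edge contractions, then `q ≥ (|V| − 1)/3`. -/
theorem stmt4 {V W : Type} [Finite V] (G : SimpleGraph V) (P : SimpleGraph W)
    (h2 : TwoEdgeConnected G) (hP : IsPathGraph P) (q : ℕ) (h : ContractsIn G P q) :
    ((Nat.card V : ℚ) - 1) / 3 ≤ (q : ℚ) := by
  obtain ⟨n, ⟨e⟩⟩ := hP
  obtain ⟨⟨f, hf⟩, hcard⟩ := contractsIn_key h ‹Finite V›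
  have hW : Nat.card W = n := by
    rw [Nat.card_congr e.toEquiv, Nat.card_eq_fintype_card, Fintype.card_fin]
  set g : V → Fin n := fun x => e (f x) with hg
  have hgs : Function.Surjective g := e.toEquiv.surjective.comp hf.surj
  have hgmap : ∀ a b, G.Adj a b → g a = g b ∨ (pathGraph n).Adj (g a) (g b) := by
    intro a b hab
    rcases hf.adj_map a b hab with h1 | h1
    · exact Or.inl (by rw [hg]; simp [h1])
    · exact Or.inr (e.map_adj_iff.mpr h1)
  have hglift : ∀ w w', (pathGraph n).Adj w w' → ∃ a b, g a = w ∧ g b = w' ∧ G.Adj a b := by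
    intro w w' hww'
    have : P.Adj (e.symm w) (e.symm w') := e.symm.map_adj_iff.mpr hww'
    obtain ⟨a, b, ha, hb, hab⟩ := hf.adj_lift _ _ this
    refine ⟨a, b, ?_, ?_, hab⟩
    · rw [hg]; simp [ha]
    · rw [hg]; simp [hb]
  have : Fintype V := Fintype.ofFinite V
  set c : Fin n → ℕ := fun i => (Finset.univ.filter fun x => g x = i).card with hc
  -- no two adjacent singleton fibers
  have key2 : ∀ i j : Fin n, (i : ℕ) + 1 = (j : ℕ) → c i = 1 → c j = 1 → False := by
    intro i j hij hci hcj
    obtain ⟨a, ha⟩ := Finset.card_eq_one.mp hci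
    obtain ⟨b, hb⟩ := Finset.card_eq_one.mp hcj
    have hga : g a = i := by
      have : a ∈ Finset.univ.filter fun x => g x = i := ha ▸ Finset.mem_singleton_self a
      exact (Finset.mem_filter.mp this).2
    have hgb : g b = j := by
      have : b ∈ Finset.univ.filter fun x => g x = j := hb ▸ Finset.mem_singleton_self b
      exact (Finset.mem_filter.mp this).2
    have hadjP : (pathGraph n).Adj i j := pathGraph_adj.mpr (Or.inl hij)
    obtain ⟨x, y, hx, hy, hxy⟩ := hglift i j hadjP
    have hxa : x = a := by
      have : x ∈ Finset.univ.filter fun z => g z = i := Finset.mem_filter.mpr ⟨Finset.mem_univ _, hx⟩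
      rw [ha, Finset.mem_singleton] at this; exact this
    have hyb : y = b := by
      have : y ∈ Finset.univ.filter fun z => g z = j := Finset.mem_filter.mpr ⟨Finset.mem_univ _, hy⟩
      rw [hb, Finset.mem_singleton] at this; exact this
    subst hxa; subst hyb
    have hmem : s(x, y) ∈ G.edgeSet := G.mem_edgeSet.mpr hxy
    have hconn := h2.2 _ hmem
    set A : Set V := {z | (g z : ℕ) ≤ (i : ℕ)} with hA
    have hxA : x ∈ A := by rw [hA]; simp [hx]
    have hyA : y ∉ A := by
      rw [hA]; simp only [Set.mem_setOf_eq, hy]; omega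
    obtain ⟨walk⟩ := (hconn.preconnected x y)
    obtain ⟨p', q', hp', hq', hadj'⟩ := cross_edge _ A walk hxA hyA
    rw [SimpleGraph.deleteEdges_adj] at hadj'
    have hGpq := hadj'.1
    rcases hgmap p' q' hGpq with heq | hadjpq
    · rw [hA, Set.mem_setOf_eq] at hp' hq'
      rw [heq] at hp'
      exact hq' hp'
    · rw [hA, Set.mem_setOf_eq] at hp' hq'
      push_neg at hq'
      rw [pathGraph_adj] at hadjpq
      have hgp : (g p' : ℕ) = (i : ℕ) := by omega
      have hgq : (g q' : ℕ) = (j : ℕ) := by omega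
      have hpx : p' = x := by
        have : g p' = i := Fin.ext hgp
        have : p' ∈ Finset.univ.filter fun z => g z = i :=
          Finset.mem_filter.mpr ⟨Finset.mem_univ _, this⟩
        rw [ha, Finset.mem_singleton] at this; exact this
      have hqy : q' = y := by
        have : g q' = j := Fin.ext hgq
        have : q' ∈ Finset.univ.filter fun z => g z = j :=
          Finset.mem_filter.mpr ⟨Finset.mem_univ _, this⟩
        rw [hb, Finset.mem_singleton] at this; exact this
      subst hpx; subst hqy
      exact hadj'.2 rfl
  -- counting
  have hsum : Fintype.card V = ∑ i : Fin n, c i := by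
    rw [hc]
    exact Finset.card_eq_sum_card_fiberwise (fun x _ => Finset.mem_univ (g x))
  have hpos : ∀ i, 1 ≤ c i := by
    intro i
    obtain ⟨x, hx⟩ := hgs i
    have : x ∈ Finset.univ.filter fun z => g z = i :=
      Finset.mem_filter.mpr ⟨Finset.mem_univ _, hx⟩
    exact Finset.card_pos.mpr ⟨x, this⟩
  set s := Finset.univ.filter fun i : Fin n => c i = 1 with hs
  set t := Finset.univ.filter fun i : Fin n => ¬ (c i = 1) with ht
  have hst : s.card + t.card = n := by
    rw [hs, ht, Finset.card_filter_add_card_filter_not]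
    simp
  have hsumge : n + t.card ≤ ∑ i : Fin n, c i := by
    calc n + t.card = ∑ i : Fin n, (1 + if ¬ (c i = 1) then 1 else 0) := by
          rw [Finset.sum_add_distrib, Finset.sum_boole]
          simp [ht]
      _ ≤ ∑ i : Fin n, c i := by
          apply Finset.sum_le_sum
          intro i _
          have := hpos i
          by_cases hci : c i = 1 <;> simp [hci] <;> omega
  -- s has no two consecutive elements; bound its card
  have hscard : s.card ≤ (n + 1) / 2 := by
    have : s.card ≤ (Finset.range ((n + 1) / 2)).card := by
      refine Finset.card_le_card_of_injOn (fun i => (i : ℕ) / 2) ?_ ?_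
      · intro i hi
        rw [Finset.mem_coe, Finset.mem_range]
        show (i : ℕ) / 2 < (n + 1) / 2
        have := i.isLt
        omega
      · intro i hi j hj hij
        rw [Finset.mem_coe, Finset.mem_filter] at hi hj
        by_contra hne
        have hvne : (i : ℕ) ≠ (j : ℕ) := fun hc => hne (Fin.ext hc)
        have hij' : (i : ℕ) / 2 = (j : ℕ) / 2 := hij
        have : (i : ℕ) + 1 = (j : ℕ) ∨ (j : ℕ) + 1 = (i : ℕ) := by omega
        rcases this with h1 | h1
        · exact key2 i j h1 hi.2 hj.2
        · exact key2 j i h1 hj.2 hi.2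
    rwa [Finset.card_range] at this
  have hcardV : Nat.card V = n + q := by rw [hcard, hW]
  have hfV : Fintype.card V = Nat.card V := (Nat.card_eq_fintype_card).symm
  have hfinal : Nat.card V ≤ 3 * q + 1 := by omega
  have hq0 : (0 : ℚ) ≤ (q : ℚ) := Nat.cast_nonneg q
  rw [div_le_iff₀ (by norm_num : (0:ℚ) < 3)]
  have : (Nat.card V : ℚ) ≤ 3 * q + 1 := by exact_mod_cast hfinal
  linarith
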